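/- Let α : F → R_n(G) be the group homomorphism determined by α(f_i) = (g_i, t_i) for i = 1,…,m. An element (g, a_1 t_1 + … + a_m t_m) of R_n(G) belongs to the image of α if and only if 1 − g = Σ_{i=1}^m a_i(1 − g_i) holds in the group ring ℤ_n[G]. In particular, (1, a_1 t_1 + … + a_m t_m) belongs to the image of α if and only if Σ_{i=1}^m a_i(1 − g_i) = 0. -/

import Mathlib

/-- The group `R_n(G)` of pairs `(g,t)` with `g ∈ G` and `t` in the free left
`ℤ_n[G]`-module with basis indexed by `ι`, with multiplication
`(g,t)(h,s) = (gh, g·s+t)` (the semidirect product `T_n ⋊ G`).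
Here `ℤ_n = ZMod n`, so `ℤ_0 = ℤ`. -/
@[ext]
structure MagnusGroup (n : ℕ) (G : Type*) [Group G] (ι : Type*) where
  fst : G
  snd : ι → MonoidAlgebra (ZMod n) G

namespace MagnusGroup

variable {n : ℕ} {G : Type*} [Group G] {ι : Type*}

noncomputable instance : Mul (MagnusGroup n G ι) :=
  ⟨fun a b => ⟨a.fst * b.fst, fun i => MonoidAlgebra.of (ZMod n) G a.fst * b.snd i + a.snd i⟩⟩

noncomputable instance : One (MagnusGroup n G ι) := ⟨⟨1, 0⟩⟩

noncomputable instance : Inv (MagnusGroup n G ι) :=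
  ⟨fun a => ⟨a.fst⁻¹, fun i => -(MonoidAlgebra.of (ZMod n) G a.fst⁻¹ * a.snd i)⟩⟩

@[simp] lemma mul_fst (a b : MagnusGroup n G ι) : (a * b).fst = a.fst * b.fst := rfl
@[simp] lemma mul_snd (a b : MagnusGroup n G ι) (i : ι) :
    (a * b).snd i = MonoidAlgebra.of (ZMod n) G a.fst * b.snd i + a.snd i := rfl
@[simp] lemma one_fst : (1 : MagnusGroup n G ι).fst = 1 := rfl
@[simp] lemma one_snd (i : ι) : (1 : MagnusGroup n G ι).snd i = 0 := rfl
@[simp] lemma inv_fst (a : MagnusGroup n G ι) : (a⁻¹).fst = a.fst⁻¹ := rfl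
@[simp] lemma inv_snd (a : MagnusGroup n G ι) (i : ι) :
    (a⁻¹).snd i = -(MonoidAlgebra.of (ZMod n) G a.fst⁻¹ * a.snd i) := rfl

noncomputable instance : Group (MagnusGroup n G ι) where
  mul_assoc a b c :=
    MagnusGroup.ext (mul_assoc _ _ _)
      (funext fun i => by simp only [mul_fst, mul_snd, map_mul, mul_add, mul_assoc, add_assoc])
  one_mul a :=
    MagnusGroup.ext (one_mul _)
      (funext fun i => by simp only [mul_fst, mul_snd, one_fst, one_snd, map_one, one_mul,
        add_zero, zero_add])
  mul_one a :=
    MagnusGroup.ext (mul_one _)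
      (funext fun i => by simp only [mul_fst, mul_snd, one_fst, one_snd, mul_zero, zero_add])
  inv_mul_cancel a :=
    MagnusGroup.ext (inv_mul_cancel _)
      (funext fun i => by simp only [mul_fst, mul_snd, inv_fst, inv_snd, one_snd,
        add_neg_cancel, neg_add_cancel])

end MagnusGroup

/-- The Magnus–Romanovskii homomorphism `α : F → R_n(G)`, `G = F/R`, sending the `i`-th
free generator `f_i` to `(g_i, t_i)`. -/
noncomputable def magnusHom (m n : ℕ) (R : Subgroup (FreeGroup (Fin m))) [R.Normal] :
    FreeGroup (Fin m) →* MagnusGroup n (FreeGroup (Fin m) ⧸ R) (Fin m) :=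
  FreeGroup.lift fun i =>
    (⟨(QuotientGroup.mk (FreeGroup.of i) : FreeGroup (Fin m) ⧸ R), Pi.single i 1⟩ :
      MagnusGroup n (FreeGroup (Fin m) ⧸ R) (Fin m))


section MagnusRangeAux

open MonoidAlgebra

variable (m n : ℕ) (R : Subgroup (FreeGroup (Fin m))) [R.Normal]

local notation "GQ" => FreeGroup (Fin m) ⧸ R
local notation "AA" => MonoidAlgebra (ZMod n) (FreeGroup (Fin m) ⧸ R)
local notation "ee" => MonoidAlgebra.of (ZMod n) (FreeGroup (Fin m) ⧸ R)
local notation "αm" => magnusHom m n R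

private def magFst : MagnusGroup n GQ (Fin m) →* GQ where
  toFun := MagnusGroup.fst
  map_one' := rfl
  map_mul' _ _ := rfl

lemma magnusHom_fst (w : FreeGroup (Fin m)) :
    (αm w).fst = (QuotientGroup.mk w : GQ) := by
  have h : (magFst m n R).comp (αm) = QuotientGroup.mk' R :=
    FreeGroup.ext_hom _ _ fun i => by simp [magnusHom, magFst]
  exact DFunLike.congr_fun h w

lemma magnusHom_of (i : Fin m) :
    αm (FreeGroup.of i) =
      (⟨(QuotientGroup.mk (FreeGroup.of i) : GQ), Pi.single i 1⟩ :
        MagnusGroup n GQ (Fin m)) :=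
  FreeGroup.lift_apply_of

/-- The Magnus relation `1 - ĝ = ∑ aᵢ (1 - ĝᵢ)`. -/
def MagRel (x : MagnusGroup n GQ (Fin m)) : Prop :=
  1 - ee x.fst = ∑ i : Fin m, x.snd i * (1 - ee (QuotientGroup.mk (FreeGroup.of i)))

lemma magRel_one : MagRel m n R 1 := by
  simp [MagRel, ← MonoidAlgebra.one_def]

lemma magRel_mul {x y : MagnusGroup n GQ (Fin m)}
    (hx : MagRel m n R x) (hy : MagRel m n R y) : MagRel m n R (x * y) := by
  unfold MagRel at *
  have h1 : 1 - ee ((x*y).fst) = (1 - ee x.fst) + ee x.fst * (1 - ee y.fst) := by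
    rw [MagnusGroup.mul_fst, map_mul]; noncomm_ring
  rw [h1, hx, hy, Finset.mul_sum, ← Finset.sum_add_distrib]
  refine Finset.sum_congr rfl fun i _ => ?_
  rw [MagnusGroup.mul_snd, add_mul, mul_assoc, add_comm]

lemma magRel_inv {x : MagnusGroup n GQ (Fin m)}
    (hx : MagRel m n R x) : MagRel m n R x⁻¹ := by
  unfold MagRel at *
  have : ∑ i : Fin m, (x⁻¹).snd i * (1 - ee (QuotientGroup.mk (FreeGroup.of i)))
      = -(ee x.fst⁻¹ * ∑ i : Fin m, x.snd i * (1 - ee (QuotientGroup.mk (FreeGroup.of i)))) := by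
    rw [Finset.mul_sum, ← Finset.sum_neg_distrib]
    refine Finset.sum_congr rfl fun i _ => ?_
    rw [MagnusGroup.inv_snd, neg_mul, mul_assoc]
  rw [this, ← hx, MagnusGroup.inv_fst, mul_sub, mul_one, ← map_mul, inv_mul_cancel, map_one,
    neg_sub]

lemma magRel_of_mem_range {x : MagnusGroup n GQ (Fin m)}
    (hx : x ∈ (αm).range) : MagRel m n R x := by
  obtain ⟨w, rfl⟩ := hx
  induction w using FreeGroup.induction_on with
  | C1 => rw [map_one]; exact magRel_one m n R
  | of i =>
      rw [magnusHom_of]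
      unfold MagRel
      simp [Pi.single_apply, ite_mul, Finset.sum_ite_eq]
  | inv_of i h => rw [map_inv]; exact magRel_inv m n R h
  | mul x y hx hy => rw [map_mul]; exact magRel_mul m n R hx hy

/-- The set of `c` with `(1,c)` in the range, as an additive subgroup. -/
noncomputable def magS0 : AddSubgroup (Fin m → AA) where
  carrier := {c | (⟨1, c⟩ : MagnusGroup n GQ (Fin m)) ∈ (αm).range}
  zero_mem' := ⟨1, by rw [map_one]; rfl⟩
  add_mem' := by
    intro c d hc hd
    have hc' : (⟨1, c⟩ : MagnusGroup n GQ (Fin m)) ∈ (αm).range := hc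
    have hd' : (⟨1, d⟩ : MagnusGroup n GQ (Fin m)) ∈ (αm).range := hd
    have h := mul_mem hc' hd'
    have he : (⟨1, c⟩ : MagnusGroup n GQ (Fin m)) * ⟨1, d⟩ = ⟨1, c + d⟩ := by
      refine MagnusGroup.ext (by simp) (funext fun i => ?_)
      simp [← MonoidAlgebra.one_def, add_comm]
    rwa [he] at h
  neg_mem' := by
    intro c hc
    have hc' : (⟨1, c⟩ : MagnusGroup n GQ (Fin m)) ∈ (αm).range := hc
    have h := inv_mem hc'
    have he : (⟨1, c⟩ : MagnusGroup n GQ (Fin m))⁻¹ = ⟨1, -c⟩ := by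
      refine MagnusGroup.ext (by simp) (funext fun i => ?_)
      simp [← MonoidAlgebra.one_def]
    rwa [he] at h

lemma magS0_smul_mem (r : AA) {c : Fin m → AA} (hc : c ∈ magS0 m n R) :
    r • c ∈ magS0 m n R := by
  induction r using MonoidAlgebra.induction_on with
  | of g =>
      obtain ⟨w, rfl⟩ := QuotientGroup.mk_surjective g
      have hx : αm w ∈ (αm).range := ⟨w, rfl⟩
      have h := mul_mem (mul_mem hx hc) (inv_mem hx)
      have he : αm w * ⟨1, c⟩ * (αm w)⁻¹
          = ⟨1, ee (QuotientGroup.mk w : GQ) • c⟩ := by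
        refine MagnusGroup.ext (by simp) (funext fun i => ?_)
        simp only [MagnusGroup.mul_snd, MagnusGroup.mul_fst, MagnusGroup.inv_snd,
          MagnusGroup.inv_fst, MagnusGroup.one_snd, mul_one, mul_zero, zero_add,
          Pi.smul_apply, smul_eq_mul, magnusHom_fst, mul_neg, ← mul_assoc, ← map_mul,
          mul_inv_cancel, map_one, one_mul]
        abel
      rwa [he] at h
  | add f g hf hg =>
      rw [add_smul]; exact (magS0 m n R).add_mem hf hg
  | smul b f hf =>
      obtain ⟨k, rfl⟩ := ZMod.intCast_surjective b
      rw [smul_assoc, Int.cast_smul_eq_zsmul]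
      exact AddSubgroup.zsmul_mem _ hf k

/-- …as a submodule over the group ring. -/
noncomputable def magS : Submodule AA (Fin m → AA) where
  carrier := magS0 m n R
  zero_mem' := (magS0 m n R).zero_mem
  add_mem' := fun h1 h2 => (magS0 m n R).add_mem h1 h2
  smul_mem' := fun r c hc => magS0_smul_mem m n R r hc

lemma mem_magS {c : Fin m → AA} :
    c ∈ magS m n R ↔ (⟨1, c⟩ : MagnusGroup n GQ (Fin m)) ∈ (αm).range := Iff.rfl

/-- The derivation `G → T/S` (Fox derivative modulo `S`). -/
noncomputable def magD0 : GQ → (Fin m → AA) ⧸ magS m n R := fun g =>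
  Quotient.liftOn' g (fun w => Submodule.Quotient.mk ((αm w).snd)) (by
    intro a b hab
    replace hab : a⁻¹ * b ∈ R := QuotientGroup.leftRel_apply.mp hab
    have hb : b = a * (a⁻¹ * b) := by group
    have h1 : (αm (a⁻¹ * b)).fst = 1 := by
      rw [magnusHom_fst]; exact (QuotientGroup.eq_one_iff _).mpr hab
    have hmem : (αm (a⁻¹ * b)).snd ∈ magS m n R := by
      rw [mem_magS]
      have he : (⟨1, (αm (a⁻¹ * b)).snd⟩ : MagnusGroup n GQ (Fin m)) = αm (a⁻¹ * b) :=
        MagnusGroup.ext h1.symm rfl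
      rw [he]; exact ⟨_, rfl⟩
    have h2 : (αm a * αm (a⁻¹ * b)).snd
        = ee ((αm a).fst) • (αm (a⁻¹ * b)).snd + (αm a).snd := by
      funext i
      simp only [MagnusGroup.mul_snd, Pi.add_apply, Pi.smul_apply, smul_eq_mul]
    rw [hb, map_mul, h2, Submodule.Quotient.mk_add,
      (Submodule.Quotient.mk_eq_zero _).mpr ((magS m n R).smul_mem _ hmem), zero_add])

lemma magD0_mk (w : FreeGroup (Fin m)) :
    magD0 m n R (QuotientGroup.mk w) = Submodule.Quotient.mk ((αm w).snd) := rfl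

lemma magD0_mul (x y : GQ) :
    magD0 m n R (x * y) = ee x • magD0 m n R y + magD0 m n R x := by
  obtain ⟨a, rfl⟩ := QuotientGroup.mk_surjective x
  obtain ⟨b, rfl⟩ := QuotientGroup.mk_surjective y
  rw [← QuotientGroup.mk_mul, magD0_mk, magD0_mk, magD0_mk, map_mul]
  have h2 : (αm a * αm b).snd
      = ee (QuotientGroup.mk a : GQ) • (αm b).snd + (αm a).snd := by
    funext i
    simp only [MagnusGroup.mul_snd, Pi.add_apply, Pi.smul_apply, smul_eq_mul, magnusHom_fst]
  rw [h2, Submodule.Quotient.mk_add, Submodule.Quotient.mk_smul]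

/-- Linear extension of the derivation to the group ring. -/
noncomputable def magD : AA →ₗ[ZMod n] (Fin m → AA) ⧸ magS m n R :=
  (Finsupp.linearCombination (ZMod n) (magD0 m n R)).comp
    (MonoidAlgebra.coeffLinearEquiv (ZMod n)).toLinearMap

lemma magD_of (g : GQ) : magD m n R (ee g) = magD0 m n R g := by
  rw [MonoidAlgebra.of_apply]
  show Finsupp.linearCombination (ZMod n) (magD0 m n R) (MonoidAlgebra.single g 1).coeff = _
  rw [MonoidAlgebra.coeff_single, Finsupp.linearCombination_single, one_smul]

lemma magD_mul_of (u : AA) (g : GQ) :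
    magD m n R (u * ee g) = u • magD0 m n R g + magD m n R u := by
  induction u using MonoidAlgebra.induction_on with
  | of h =>
      rw [← map_mul, magD_of, magD_of, magD0_mul]
  | add f f' hf hf' =>
      rw [add_mul, map_add, map_add, hf, hf', add_smul]; abel
  | smul b f hf =>
      rw [smul_mul_assoc, map_smul, hf, map_smul, smul_add, smul_assoc]

lemma magD_mul_one_sub (u : AA) (g : GQ) :
    magD m n R (u * (1 - ee g)) = -(u • magD0 m n R g) := by
  rw [mul_sub, mul_one, map_sub, magD_mul_of]
  abel

lemma sum_single_eq (c : Fin m → AA) :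
    ∑ i : Fin m, c i • (Pi.single i 1 : Fin m → AA) = c := by
  funext j
  simp [Finset.sum_apply, Pi.single_apply, ite_mul, Finset.sum_ite_eq]

lemma mem_range_of_sum_eq_zero (c : Fin m → AA)
    (hc : ∑ i : Fin m, c i * (1 - ee (QuotientGroup.mk (FreeGroup.of i))) = 0) :
    (⟨1, c⟩ : MagnusGroup n GQ (Fin m)) ∈ (αm).range := by
  rw [← mem_magS]
  rw [← Submodule.Quotient.mk_eq_zero]
  have h0 := congrArg (magD m n R) hc
  rw [map_zero, map_sum] at h0
  have key : ∀ i : Fin m, magD m n R (c i * (1 - ee (QuotientGroup.mk (FreeGroup.of i))))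
      = -(c i • magD0 m n R (QuotientGroup.mk (FreeGroup.of i))) := fun i =>
    magD_mul_one_sub m n R _ _
  simp only [key] at h0
  have hdg : ∀ i : Fin m, magD0 m n R (QuotientGroup.mk (FreeGroup.of i))
      = Submodule.Quotient.mk (Pi.single i 1 : Fin m → AA) := fun i => by
    rw [magD0_mk, magnusHom_of]
  simp only [hdg, ← Submodule.Quotient.mk_smul] at h0
  rw [Finset.sum_neg_distrib, neg_eq_zero] at h0
  have h1 : (Submodule.Quotient.mk c : (Fin m → AA) ⧸ magS m n R)
      = ∑ i : Fin m, Submodule.Quotient.mk (c i • (Pi.single i 1 : Fin m → AA)) := by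
    conv_lhs => rw [← sum_single_eq m n R c]
    exact map_sum ((magS m n R).mkQ) _ _
  rw [h1]
  exact h0

lemma main_iff (g : GQ) (a : Fin m → AA) :
    (⟨g, a⟩ : MagnusGroup n GQ (Fin m)) ∈ (αm).range ↔
      1 - ee g = ∑ i : Fin m, a i * (1 - ee (QuotientGroup.mk (FreeGroup.of i))) := by
  constructor
  · intro h
    exact magRel_of_mem_range m n R h
  · intro h
    obtain ⟨w, rfl⟩ := QuotientGroup.mk_surjective g
    have hx : αm w ∈ (αm).range := ⟨w, rfl⟩
    have hrel := magRel_of_mem_range m n R hx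
    unfold MagRel at hrel
    rw [magnusHom_fst] at hrel
    have hc : ∑ i : Fin m, (a i - (αm w).snd i) *
        (1 - ee (QuotientGroup.mk (FreeGroup.of i))) = 0 := by
      simp only [sub_mul, Finset.sum_sub_distrib]
      rw [← h, ← hrel, sub_self]
    have h1 := mem_range_of_sum_eq_zero m n R _ hc
    have h2 := mul_mem h1 hx
    have he : (⟨1, fun i => a i - (αm w).snd i⟩ : MagnusGroup n GQ (Fin m)) * αm w
        = ⟨QuotientGroup.mk w, a⟩ := by
      refine MagnusGroup.ext ?_ (funext fun i => ?_)
      · rw [MagnusGroup.mul_fst, magnusHom_fst]; exact one_mul _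
      · simp [← MonoidAlgebra.one_def]
    rwa [he] at h2

end MagnusRangeAux

/-- An element `(g, Σ aᵢ tᵢ)` of `R_n(G)` lies in the image of `α` iff
`1 - g = Σᵢ aᵢ (1 - gᵢ)` in the group ring `ℤ_n[G]`; in particular `(1, Σ aᵢ tᵢ)` lies in
the image iff `Σᵢ aᵢ (1 - gᵢ) = 0`. -/
theorem magnusHom_range (m n : ℕ) (R : Subgroup (FreeGroup (Fin m))) [R.Normal] :
    (∀ (g : FreeGroup (Fin m) ⧸ R)
        (a : Fin m → MonoidAlgebra (ZMod n) (FreeGroup (Fin m) ⧸ R)),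
      (⟨g, a⟩ : MagnusGroup n (FreeGroup (Fin m) ⧸ R) (Fin m)) ∈ (magnusHom m n R).range ↔
        1 - MonoidAlgebra.of (ZMod n) (FreeGroup (Fin m) ⧸ R) g =
          ∑ i : Fin m, a i *
            (1 - MonoidAlgebra.of (ZMod n) (FreeGroup (Fin m) ⧸ R)
              (QuotientGroup.mk (FreeGroup.of i)))) ∧
    (∀ a : Fin m → MonoidAlgebra (ZMod n) (FreeGroup (Fin m) ⧸ R),
      (⟨1, a⟩ : MagnusGroup n (FreeGroup (Fin m) ⧸ R) (Fin m)) ∈ (magnusHom m n R).range ↔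
        ∑ i : Fin m, a i *
          (1 - MonoidAlgebra.of (ZMod n) (FreeGroup (Fin m) ⧸ R)
            (QuotientGroup.mk (FreeGroup.of i))) = 0) := by
  constructor
  · exact fun g a => main_iff m n R g a
  · intro a
    rw [main_iff m n R 1 a, map_one, sub_self]
    exact eq_comm
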